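/- Let X be a connected (strongly connected) digraph whose A-Laplacian L is normal. Then 0 is an eigenvalue of L with algebraic multiplicity exactly 1, and every nonzero eigenvalue λ of L satisfies Re(λ) > 0. -/

import Mathlib

open Matrix Finset

def adjMat {V : Type*} [Fintype V] (R : V → V → Prop) [DecidableRel R] :
    Matrix V V ℝ := fun u v => if R u v then 1 else 0

def outDeg {V : Type*} [Fintype V] (R : V → V → Prop) [DecidableRel R] (u : V) : ℕ :=
  (Finset.univ.filter (fun v => R u v)).card

def lap {V : Type*} [Fintype V] [DecidableEq V] (R : V → V → Prop) [DecidableRel R] :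
    Matrix V V ℝ :=
  Matrix.diagonal (fun u => (outDeg R u : ℝ)) - adjMat R

section Aux

variable {V : Type*} [Fintype V] [DecidableEq V] (R : V → V → Prop) [DecidableRel R]

noncomputable def lapC : Matrix V V ℂ := (lap R).map (fun x : ℝ => (x : ℂ))

lemma lapC_apply (u v : V) :
    lapC R u v = (if u = v then (outDeg R u : ℂ) else 0) - (if R u v then 1 else 0) := by
  simp only [lapC, Matrix.map_apply, lap, Matrix.sub_apply, Matrix.diagonal_apply, adjMat]
  push_cast
  split_ifs <;> simp

lemma lapC_conj (u v : V) : (starRingEnd ℂ) (lapC R u v) = lapC R u v := by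
  simp [lapC, Matrix.map_apply, Complex.conj_ofReal]

lemma sum_indicator_row (u : V) :
    (∑ v, (if R u v then (1 : ℂ) else 0)) = (outDeg R u : ℂ) := by
  rw [Finset.sum_boole, outDeg]

lemma lapC_mulVec_one : lapC R *ᵥ (fun _ => (1 : ℂ)) = 0 := by
  funext u
  simp only [Matrix.mulVec, dotProduct, mul_one, Pi.zero_apply]
  calc (∑ v, lapC R u v)
      = (∑ v, ((if u = v then (outDeg R u : ℂ) else 0) - (if R u v then 1 else 0))) :=
        Finset.sum_congr rfl (fun v _ => by rw [lapC_apply])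
    _ = 0 := by
        rw [Finset.sum_sub_distrib, Finset.sum_ite_eq (Finset.univ) u
          (fun _ => (outDeg R u : ℂ)), sum_indicator_row]
        simp

lemma lapC_conjTranspose : (lapC R)ᴴ = (lapC R)ᵀ := by
  ext u v
  simp [Matrix.conjTranspose_apply, lapC_conj]

lemma lapC_normal (hnormal : lap R * (lap R)ᵀ = (lap R)ᵀ * lap R) :
    lapC R * (lapC R)ᵀ = (lapC R)ᵀ * lapC R := by
  ext u v
  have h := congrFun (congrFun hnormal u) v
  simp only [Matrix.mul_apply, Matrix.transpose_apply] at h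
  simp only [Matrix.mul_apply, Matrix.transpose_apply, lapC, Matrix.map_apply]
  exact_mod_cast h

/-- in-degree equals out-degree, as an indicator-sum statement over ℂ. -/
lemma deg_balance (hloopless : ∀ u, ¬ R u u)
    (hnormal : lap R * (lap R)ᵀ = (lap R)ᵀ * lap R) (u : V) :
    (∑ v, (if R v u then (1 : ℂ) else 0)) = ∑ v, (if R u v then (1 : ℂ) else 0) := by
  have h := congrFun (congrFun (lapC_normal R hnormal) u) u
  have h1 : ∀ v, lapC R u v * (lapC R)ᵀ v u
      = (if u = v then (outDeg R u : ℂ)^2 else 0) + (if R u v then 1 else 0) := by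
    intro v
    rw [Matrix.transpose_apply, lapC_apply]
    rcases eq_or_ne u v with rfl | hne
    · simp [hloopless u, sq]
    · simp only [if_neg hne]
      split_ifs <;> ring
  have h2 : ∀ v, (lapC R)ᵀ u v * lapC R v u
      = (if u = v then (outDeg R u : ℂ)^2 else 0) + (if R v u then 1 else 0) := by
    intro v
    rw [Matrix.transpose_apply, lapC_apply]
    rcases eq_or_ne u v with rfl | hne
    · simp [hloopless u, sq]
    · rw [if_neg (fun hh => hne hh.symm), if_neg hne]
      split_ifs <;> ring
  rw [Matrix.mul_apply, Matrix.mul_apply] at h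
  rw [Finset.sum_congr rfl (fun v _ => h1 v), Finset.sum_congr rfl (fun v _ => h2 v),
    Finset.sum_add_distrib, Finset.sum_add_distrib] at h
  exact (add_left_cancel h).symm

/-- congruence for double sums -/
lemma sum2_congr {V : Type*} [Fintype V] {f g : V → V → ℂ} (h : ∀ u v, f u v = g u v) :
    ∑ u, ∑ v, f u v = ∑ u, ∑ v, g u v :=
  Finset.sum_congr rfl fun u _ => Finset.sum_congr rfl fun v _ => h u v

/-- Key quadratic-form identity. -/
lemma key_identity (hloopless : ∀ u, ¬ R u u)
    (hnormal : lap R * (lap R)ᵀ = (lap R)ᵀ * lap R) (x : V → ℂ) :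
    star x ⬝ᵥ (lapC R *ᵥ x) + star (lapC R *ᵥ x) ⬝ᵥ x
      = ((∑ u, ∑ v, (if R u v then Complex.normSq (x u - x v) else 0) : ℝ) : ℂ) := by
  have hdeg := deg_balance R hloopless hnormal
  set c : V → ℂ := fun u => (starRingEnd ℂ) (x u) with hc
  set e : V → V → ℂ := fun u v => if R u v then (1 : ℂ) else 0 with he
  set d : V → ℂ := fun u => (outDeg R u : ℂ) with hd
  have claim1 : star x ⬝ᵥ (lapC R *ᵥ x) = ∑ u, ∑ v, lapC R u v * (c u * x v) := by
    simp only [dotProduct, Matrix.mulVec, Pi.star_apply, RCLike.star_def,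
      Finset.mul_sum]
    exact Finset.sum_congr rfl fun u _ => Finset.sum_congr rfl fun v _ => by
      simp only [hc]; ring
  have claim2 : star (lapC R *ᵥ x) ⬝ᵥ x = ∑ u, ∑ v, lapC R u v * (x u * c v) := by
    simp only [dotProduct, Matrix.mulVec, Pi.star_apply, RCLike.star_def, map_sum,
      Finset.sum_mul]
    refine Finset.sum_congr rfl fun u _ => Finset.sum_congr rfl fun v _ => ?_
    rw [_root_.map_mul, lapC_conj]
    simp only [hc]; ring
  have claim3 : star x ⬝ᵥ (lapC R *ᵥ x) + star (lapC R *ᵥ x) ⬝ᵥ x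
      = ∑ u, ∑ v, (lapC R u v * (c u * x v) + lapC R u v * (x u * c v)) := by
    rw [claim1, claim2, ← Finset.sum_add_distrib]
    exact Finset.sum_congr rfl fun u _ => (Finset.sum_add_distrib).symm
  have claim4 : ∀ u v : V, lapC R u v * (c u * x v) + lapC R u v * (x u * c v)
      = (if u = v then d u * (c u * x u + x u * c u) else 0)
        - e u v * (c u * x v + x u * c v) := by
    intro u v
    rw [lapC_apply, he, hd]
    rcases eq_or_ne u v with rfl | h
    · simp only [if_pos rfl]; split_ifs <;> ring
    · simp only [if_neg h]; split_ifs <;> ring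
  have claim5 : star x ⬝ᵥ (lapC R *ᵥ x) + star (lapC R *ᵥ x) ⬝ᵥ x
      = (∑ u, d u * (c u * x u + x u * c u))
        - ∑ u, ∑ v, e u v * (c u * x v + x u * c v) := by
    rw [claim3, sum2_congr claim4, ← Finset.sum_sub_distrib]
    refine Finset.sum_congr rfl fun u _ => ?_
    rw [Finset.sum_sub_distrib]
    simp
  have claim6 : ((∑ u, ∑ v, (if R u v then Complex.normSq (x u - x v) else 0) : ℝ) : ℂ)
      = ∑ u, ∑ v, e u v * ((x u - x v) * (c u - c v)) := by
    push_cast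
    refine Finset.sum_congr rfl fun u _ => Finset.sum_congr rfl fun v _ => ?_
    simp only [he, hc]
    split_ifs with h
    · rw [one_mul, ← map_sub, Complex.mul_conj]
    · simp
  have expand : ∀ u v : V, e u v * ((x u - x v) * (c u - c v))
      = (e u v * (x u * c u) + e u v * (x v * c v))
        - e u v * (c u * x v + x u * c v) := fun u v => by ring
  have split : ∑ u, ∑ v, ((e u v * (x u * c u) + e u v * (x v * c v))
        - e u v * (c u * x v + x u * c v))
      = ((∑ u, ∑ v, e u v * (x u * c u)) + ∑ u, ∑ v, e u v * (x v * c v))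
        - ∑ u, ∑ v, e u v * (c u * x v + x u * c v) := by
    have h1 : ∀ u : V, ∑ v, ((e u v * (x u * c u) + e u v * (x v * c v))
          - e u v * (c u * x v + x u * c v))
        = ((∑ v, e u v * (x u * c u)) + ∑ v, e u v * (x v * c v))
          - ∑ v, e u v * (c u * x v + x u * c v) := fun u => by
      rw [Finset.sum_sub_distrib, Finset.sum_add_distrib]
    rw [Finset.sum_congr rfl fun u (_ : u ∈ univ) => h1 u, Finset.sum_sub_distrib,
      Finset.sum_add_distrib]
  have claim8 : ∑ u, ∑ v, e u v * (x u * c u) = ∑ u, d u * (x u * c u) := by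
    refine Finset.sum_congr rfl fun u _ => ?_
    rw [← Finset.sum_mul, he, sum_indicator_row, hd]
  have claim9 : ∑ u, ∑ v, e u v * (x v * c v) = ∑ u, d u * (x u * c u) := by
    rw [Finset.sum_comm]
    refine Finset.sum_congr rfl fun v _ => ?_
    rw [← Finset.sum_mul, he, hdeg v, sum_indicator_row, hd]
  rw [claim5, claim6, sum2_congr expand, split, claim8, claim9]
  congr 1
  rw [← Finset.sum_add_distrib]
  exact Finset.sum_congr rfl fun u _ => by ring

/-- sum-of-squares zero implies all edge differences vanish, hence constant by connectivity -/
lemma const_of_sum_zero (hconn : ∀ u v : V, Relation.ReflTransGen R u v) (x : V → ℂ)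
    (h0 : (∑ u, ∑ v, (if R u v then Complex.normSq (x u - x v) else 0) : ℝ) = 0) :
    ∀ u v, x u = x v := by
  have hterm : ∀ u v, R u v → x u = x v := by
    have h1 := (Finset.sum_eq_zero_iff_of_nonneg (fun u _ =>
      Finset.sum_nonneg fun v _ => by
        split_ifs
        exacts [Complex.normSq_nonneg _, le_rfl])).mp h0
    intro u v huv
    have h2 := (Finset.sum_eq_zero_iff_of_nonneg (fun v _ => by
        split_ifs
        exacts [Complex.normSq_nonneg _, le_rfl])).mp
      (h1 u (Finset.mem_univ u)) v (Finset.mem_univ v)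
    rw [if_pos huv] at h2
    have := Complex.normSq_eq_zero.mp h2
    exact sub_eq_zero.mp this
  have hrtg : ∀ u v, Relation.ReflTransGen R u v → x u = x v := by
    intro u v h
    induction h with
    | refl => rfl
    | tail _ hbc ih => exact ih.trans (hterm _ _ hbc)
  exact fun u v => hrtg u v (hconn u v)

open ComplexOrder in
/-- kernel of square of normal matrix -/
lemma ker_sq {n : Type*} [Fintype n] {A : Matrix n n ℂ} (hA : A * Aᴴ = Aᴴ * A) (v : n → ℂ)
    (h : A *ᵥ (A *ᵥ v) = 0) : A *ᵥ v = 0 := by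
  set w := A *ᵥ v with hw
  have h1 : Aᴴ *ᵥ w = 0 := by
    rw [← dotProduct_star_self_eq_zero (v := Aᴴ *ᵥ w)]
    rw [star_mulVec, conjTranspose_conjTranspose, ← dotProduct_mulVec,
      mulVec_mulVec, hA, ← mulVec_mulVec]
    rw [show A *ᵥ w = 0 from h]
    simp
  rw [← dotProduct_star_self_eq_zero (v := w)]
  rw [hw, star_mulVec, ← hw, ← dotProduct_mulVec, h1]
  simp

end Aux

theorem stmt9 {V : Type*} [Fintype V] [DecidableEq V] [Nonempty V]
    (R : V → V → Prop) [DecidableRel R]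
    (hloopless : ∀ u, ¬ R u u)
    (hconn : ∀ u v : V, Relation.ReflTransGen R u v)
    (hnormal : lap R * (lap R)ᵀ = (lap R)ᵀ * lap R) :
    ((lap R).map (fun x : ℝ => (x : ℂ))).charpoly.rootMultiplicity 0 = 1 ∧
      ∀ lam ∈ spectrum ℂ ((lap R).map (fun x : ℝ => (x : ℂ))), lam ≠ 0 → 0 < lam.re := by
  have hLmap : (lap R).map (fun x : ℝ => (x : ℂ)) = lapC R := rfl
  have hone : (fun _ => (1 : ℂ)) ≠ (0 : V → ℂ) := by
    intro h
    exact one_ne_zero (congrFun h (Classical.arbitrary V))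
  have hconst : ∀ x : V → ℂ, lapC R *ᵥ x = 0 → ∀ u v, x u = x v := by
    intro x hx
    have hkey := key_identity R hloopless hnormal x
    rw [hx] at hkey
    simp only [dotProduct_zero, star_zero, zero_dotProduct, add_zero] at hkey
    refine const_of_sum_zero R hconn x ?_
    exact_mod_cast hkey.symm
  have hsmul : ∀ x : V → ℂ, (∀ u v, x u = x v) → lapC R *ᵥ x = 0 := by
    intro x hx
    obtain u₀ : V := Classical.arbitrary V
    have hx1 : x = x u₀ • (fun _ => (1 : ℂ)) := funext fun u => by
      simp [hx u u₀]
    rw [hx1, Matrix.mulVec_smul, lapC_mulVec_one, smul_zero]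
  constructor
  · -- algebraic multiplicity of 0 is 1
    have hA : lapC R * (lapC R)ᴴ = (lapC R)ᴴ * lapC R := by
      rw [lapC_conjTranspose]; exact lapC_normal R hnormal
    have hpow : ∀ (k : ℕ) (m : V → ℂ), ((Matrix.toLin' (lapC R)) ^ k) m = 0 →
        (Matrix.toLin' (lapC R)) m = 0 := by
      intro k
      induction k with
      | zero => intro m hm; simp only [pow_zero, Module.End.one_apply] at hm
                rw [hm]; exact map_zero _
      | succ k ih =>
        intro m hm
        rw [pow_succ, Module.End.mul_apply] at hm
        have h2 := ih _ hm
        rw [Matrix.toLin'_apply, Matrix.toLin'_apply] at h2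
        rw [Matrix.toLin'_apply]
        exact ker_sq hA m h2
    have hker : LinearMap.ker (Matrix.toLin' (lapC R))
        = Submodule.span ℂ {(fun _ => (1 : ℂ) : V → ℂ)} := by
      apply le_antisymm
      · intro x hx
        rw [LinearMap.mem_ker, Matrix.toLin'_apply] at hx
        have hcst := hconst x hx
        have : x = x (Classical.arbitrary V) • (fun _ => (1 : ℂ)) := funext fun u => by
          simp [hcst u (Classical.arbitrary V)]
        rw [this]
        exact Submodule.smul_mem _ _ (Submodule.mem_span_singleton_self _)
      · rw [Submodule.span_le, Set.singleton_subset_iff]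
        simp only [SetLike.mem_coe, LinearMap.mem_ker, Matrix.toLin'_apply]
        exact lapC_mulVec_one R
    have hmax : Module.End.maxGenEigenspace (Matrix.toLin' (lapC R)) 0
        = LinearMap.ker (Matrix.toLin' (lapC R)) := by
      ext m
      rw [Module.End.mem_maxGenEigenspace]
      simp only [zero_smul, sub_zero, LinearMap.mem_ker]
      constructor
      · rintro ⟨k, hk⟩; exact hpow k m hk
      · intro h; exact ⟨1, by simpa [pow_one] using h⟩
    have hchar : (lapC R).charpoly = LinearMap.charpoly (Matrix.toLin' (lapC R)) := by
      rw [← LinearMap.charpoly_toMatrix (Matrix.toLin' (lapC R)) (Pi.basisFun ℂ V),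
        LinearMap.toMatrix_eq_toMatrix', LinearMap.toMatrix'_toLin']
    rw [hLmap, Polynomial.rootMultiplicity_eq_natTrailingDegree', hchar,
      ← LinearMap.finrank_maxGenEigenspace_zero_eq, hmax, hker, finrank_span_singleton hone]
  · -- positive real part
    intro lam hlam hne
    rw [hLmap, ← AlgEquiv.spectrum_eq (Matrix.toLinAlgEquiv <| Pi.basisFun ℂ V),
      ← Module.End.hasEigenvalue_iff_mem_spectrum] at hlam
    obtain ⟨x, hx, hx0⟩ := hlam.exists_hasEigenvector
    rw [Module.End.mem_eigenspace_iff] at hx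
    have hxeq : lapC R *ᵥ x = lam • x := by
      rw [← Matrix.toLin'_apply, ← Matrix.toLin_eq_toLin']
      exact hx
    have hkey := key_identity R hloopless hnormal x
    rw [hxeq] at hkey
    set N : ℝ := ∑ u, Complex.normSq (x u) with hN
    have hn : star x ⬝ᵥ x = (N : ℂ) := by
      rw [hN]
      push_cast
      simp only [dotProduct, Pi.star_apply, RCLike.star_def]
      exact Finset.sum_congr rfl fun u _ => by
        rw [mul_comm, Complex.mul_conj]
    have hNpos : 0 < N := by
      have h1 : ∃ u, x u ≠ 0 := by
        by_contra h
        push_neg at h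
        exact hx0 (funext h)
      obtain ⟨u, hu⟩ := h1
      exact Finset.sum_pos' (fun v _ => Complex.normSq_nonneg _)
        ⟨u, Finset.mem_univ u, Complex.normSq_pos.mpr hu⟩
    set E : ℝ := ∑ u, ∑ v, (if R u v then Complex.normSq (x u - x v) else 0) with hE
    have hEnn : 0 ≤ E := Finset.sum_nonneg fun u _ => Finset.sum_nonneg fun v _ => by
      split_ifs
      exacts [Complex.normSq_nonneg _, le_rfl]
    have heq : ((2 * lam.re * N : ℝ) : ℂ) = (E : ℂ) := by
      rw [← hkey]
      rw [dotProduct_smul, star_smul, smul_dotProduct, hn]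
      rw [smul_eq_mul, smul_eq_mul, RCLike.star_def, ← add_mul, Complex.add_conj]
      push_cast
      ring
    have heqR : 2 * lam.re * N = E := by exact_mod_cast heq
    rcases lt_or_eq_of_le (by nlinarith : (0:ℝ) ≤ lam.re) with h | h
    · exact h
    · exfalso
      have hE0 : E = 0 := by nlinarith
      rw [hE] at hE0
      have hcst := const_of_sum_zero R hconn x hE0
      have h0 : lapC R *ᵥ x = 0 := hsmul x hcst
      rw [hxeq] at h0
      rcases smul_eq_zero.mp h0 with h | h
      · exact hne h
      · exact hx0 h
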